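/- Let q, d ≥ 3, β > 0, and let x ∈ (1/q, 1) satisfy the ferromagnetic BP fixed-point equation. Then (e^β - 1)·x > 1/(d-2). Equivalently, with t = (1+(e^β-1)x)/(1+(e^β-1)(1-x)/(q-1)) > 1 and e^β - 1 = (t-1)(t^(d-1)+q-1)/(t^(d-1)-t), x = t^(d-1)/(t^(d-1)+q-1), the product (e^β-1)·x = (t-1)·t^(d-1)/(t^(d-1)-t) exceeds 1/(d-2). -/
import Mathlib

lemma aux_pow (m : ℕ) (hm : 1 ≤ m) (a b : ℝ) (hb : 0 < b) (hba : b < a) :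
    (a^m - b^m)*b < m*a^m*(a-b) := by
  induction m with
  | zero => omega
  | succ n ih =>
    rcases Nat.eq_zero_or_pos n with hn | hn
    · subst hn; simp; nlinarith
    · have H := ih hn
      have ha0 : 0 < a := hb.trans hba
      have h1 : a*((a^n - b^n)*b) < a*(n*a^n*(a-b)) :=
        mul_lt_mul_of_pos_left H ha0
      have h2 : b^n*b < a^n*a := by
        have := pow_lt_pow_left₀ hba hb.le (Nat.succ_ne_zero n)
        rw [pow_succ, pow_succ] at this; exact this
      have h3 : b^n*b*(a-b) < a^n*a*(a-b) :=
        mul_lt_mul_of_pos_right h2 (by linarith)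
      rw [pow_succ, pow_succ]
      push_cast
      nlinarith [h1, h3]

set_option maxHeartbeats 1000000 in
/-- The dominant colour class of the ferromagnetic BP fixed point percolates
supercritically: (e^β - 1)·x > 1/(d-2). -/
theorem dominant_supercritical (q d : ℕ) (hq : 3 ≤ q) (hd : 3 ≤ d)
    (β x : ℝ) (hβ : 0 < β) (hx : x ∈ Set.Ioo (1/(q:ℝ)) 1)
    (hfix : x = (1+(Real.exp β-1)*x)^(d-1) /
      ((1+(Real.exp β-1)*x)^(d-1)
        + ((q:ℝ)-1)*(1+(Real.exp β-1)*(1-x)/((q:ℝ)-1))^(d-1))) :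
    1/((d:ℝ)-2) < (Real.exp β - 1)*x := by
  obtain ⟨hx1, hx2⟩ := hx
  have hq3 : (3:ℝ) ≤ (q:ℝ) := by exact_mod_cast hq
  have hq0 : (0:ℝ) < (q:ℝ) := by linarith
  have hq1 : (0:ℝ) < (q:ℝ) - 1 := by linarith
  have hx0 : 0 < x := lt_trans (by positivity) hx1
  have hqx : 1 < (q:ℝ)*x := by
    rw [div_lt_iff₀ hq0] at hx1; linarith
  have hE : 0 < Real.exp β - 1 := by
    have : (1:ℝ) < Real.exp β := by
      rw [← Real.exp_zero]; exact Real.exp_lt_exp.mpr hβ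
    linarith
  set E := Real.exp β - 1 with hEdef
  set c : ℝ := (1-x)/((q:ℝ)-1) with hcdef
  have hc : c * ((q:ℝ)-1) = 1 - x := div_mul_cancel₀ _ (ne_of_gt hq1)
  have hc0 : 0 < c := div_pos (by linarith) hq1
  have hcx : c < x := by rw [hcdef, div_lt_iff₀ hq1]; nlinarith
  set m := d - 2 with hmdef
  have hm1 : 1 ≤ m := by omega
  have hdm : d - 1 = m + 1 := by omega
  set a := 1 + E*x with hadef
  have hbexp : (1+E*(1-x)/((q:ℝ)-1)) = 1 + E*c := by rw [hcdef]; ring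
  rw [hdm, hbexp] at hfix
  set b := 1 + E*c with hbdef
  have hb1 : 1 < b := by nlinarith [mul_pos hE hc0]
  have hba : b < a := by nlinarith [mul_pos hE (sub_pos.2 hcx)]
  have ha0 : 0 < a := by linarith
  have hb0 : 0 < b := by linarith
  have hD : 0 < a^(m+1) + ((q:ℝ)-1)*b^(m+1) := by positivity
  rw [eq_div_iff (ne_of_gt hD)] at hfix
  have h2 : x*((q:ℝ)-1)*b^(m+1) = c*((q:ℝ)-1)*a^(m+1) := by
    linear_combination hfix - a^(m+1)*hc
  have hkey2 : (a-1)*b^(m+1) = (b-1)*a^(m+1) := by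
    apply mul_left_cancel₀ (ne_of_gt hq1)
    linear_combination E*h2 + ((q:ℝ)-1)*(b^(m+1)*hadef - a^(m+1)*hbdef)
  have hmain : (a-1)*((a^m - b^m)*b) = a^m*(a-b) := by
    linear_combination -hkey2
  have haux := aux_pow m hm1 a b hb0 hba
  have hpowpos : 0 < a^m - b^m := by
    have := pow_lt_pow_left₀ hba hb0.le (by omega : m ≠ 0)
    linarith
  have hmcast : ((d:ℝ)-2) = (m:ℝ) := by
    rw [hmdef]
    have : ((d - 2 : ℕ):ℝ) = (d:ℝ) - 2 := by
      push_cast [Nat.cast_sub (by omega : 2 ≤ d)]; ring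
    rw [this]
  have hm0 : (0:ℝ) < (m:ℝ) := by exact_mod_cast hm1
  have hgoal : E*x = a - 1 := by rw [hadef]; ring
  rw [hmcast, div_lt_iff₀ hm0, hgoal]
  -- want 1 < (a-1)*m
  have hP : 0 < (a^m - b^m)*b := mul_pos hpowpos hb0
  nlinarith [hmain, haux, hP, mul_pos hP hm0]
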